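/- Nesting criteria for half-spaces (Lemma 'hs nest', sufficiency): Let a hierarchical family of trees be given, with 0-consistent set Q. Let Q_{e,s} and Q_{e′,s′} be half-spaces, where e is an edge of T_U with half-tree s and e′ is an edge of T_V with half-tree s′. Then Q_{e,s} ⊆ Q_{e′,s′} provided at least one of the following holds: (1) U = V and s ⊆ s′; (2) U ⋔ V, δ^U_V ∈ s′, and δ^V_U ∉ s; (3) V ⊏ U, δ^V_U ∉ s, and the common value of δ^U_V on the component of T_U − δ^V_U containing s lies in s′; (4) U ⊏ V, δ^U_V ∈ s′, and the common value of δ^V_U on the component of T_V − δ^U_V containing the complementary half-tree s′* lies outside s. -/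

import Mathlib

/-- `a` and `b` lie in the same connected component of the tree `G` with the vertex `w`
deleted (equivalently: `a, b ≠ w` and `w` does not lie on the geodesic from `a` to `b`). -/
def treeSameComp {α : Type*} (G : SimpleGraph α) (w a b : α) : Prop :=
  a ≠ w ∧ b ≠ w ∧ G.dist a w + G.dist w b ≠ G.dist a b

/-- `m` is the median of `a`, `b`, `c` in the tree `G`: it lies on all three
pairwise geodesics. -/
def IsTreeMedian {α : Type*} (G : SimpleGraph α) (a b c m : α) : Prop :=
  G.dist a m + G.dist m b = G.dist a b ∧
  G.dist a m + G.dist m c = G.dist a c ∧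
  G.dist b m + G.dist m c = G.dist b c

/-- A hierarchical family of trees: a finite index set `Idx` of domains with relations
`⊏` (proper nesting) and `⊥` (orthogonality), a finite simplicial tree `G U` on the
finite vertex set `Vtx U` for each domain `U`, marked vertices labeled by the finite set
`F`, and relative projection data `δup`/`δdown` satisfying coherence, bounded geodesic
image, and consistency of the marked tuples. -/
structure HFT (Idx : Type*) [Fintype Idx] (Vtx : Idx → Type*) [∀ U, Fintype (Vtx U)]
    (F : Type*) [Fintype F] where
  /-- proper nesting `⊏` -/
  pnest : Idx → Idx → Prop
  /-- orthogonality `⊥` -/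
  orth : Idx → Idx → Prop
  pnest_irrefl : ∀ U, ¬ pnest U U
  pnest_trans : ∀ U V W, pnest U V → pnest V W → pnest U W
  /-- `⊏` has a unique maximal element -/
  max_unique : ∃! m : Idx, ∀ W, ¬ pnest m W
  orth_symm : ∀ U V, orth U V → orth V U
  orth_irrefl : ∀ U, ¬ orth U U
  orth_not_pnest : ∀ U V, orth U V → ¬ pnest U V
  /-- the tree associated to each domain -/
  G : (U : Idx) → SimpleGraph (Vtx U)
  tree : ∀ U, (G U).IsTree
  /-- the marked vertex of `T_U` labeled by `f : F` -/
  mark : (U : Idx) → F → Vtx U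
  /-- every leaf is marked -/
  leaf_marked : ∀ (U : Idx) (v : Vtx U),
    Set.Subsingleton {w : Vtx U | (G U).Adj v w} → ∃ f : F, mark U f = v
  /-- the relative projection vertex `δup V U = δ^V_U ∈ T_U`
  (relevant when `V ⊏ U` or `V ⋔ U`) -/
  δup : (V U : Idx) → Vtx U
  /-- the relative projection map `δdown U V = δ^U_V : T_U → T_V` (for `V ⊏ U`) -/
  δdown : (U V : Idx) → Vtx U → Vtx V
  /-- every component of `T_U − δ^V_U` contains a marked vertex -/
  comp_marked : ∀ V U : Idx,
    (pnest V U ∨ (V ≠ U ∧ ¬ pnest V U ∧ ¬ pnest U V ∧ ¬ orth V U)) →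
    ∀ a : Vtx U, a ≠ δup V U → ∃ f : F, treeSameComp (G U) (δup V U) a (mark U f)
  /-- `δ^U_W = δ^V_W` whenever `U ⊥ V`, `V ⊏ W`, and `U ⊏ W` or `U ⋔ W` -/
  δ_coherent : ∀ U V W : Idx, orth U V → pnest V W →
    (pnest U W ∨ (U ≠ W ∧ ¬ pnest U W ∧ ¬ pnest W U ∧ ¬ orth U W)) →
    δup U W = δup V W
  /-- bounded geodesic image: `δ^U_V` is constant on each component of `T_U − δ^V_U` … -/
  bgi_const : ∀ U V : Idx, pnest V U → ∀ a b : Vtx U,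
    treeSameComp (G U) (δup V U) a b → δdown U V a = δdown U V b
  /-- … with value `f̂_V` on the component containing `f̂_U` -/
  bgi_mark : ∀ U V : Idx, pnest V U → ∀ f : F,
    mark U f ≠ δup V U → δdown U V (mark U f) = mark V f
  /-- the marked tuples are 0-consistent (transverse case) -/
  mark_consistent_t : ∀ (f : F) (U V : Idx),
    (U ≠ V ∧ ¬ pnest U V ∧ ¬ pnest V U ∧ ¬ orth U V) →
    mark U f = δup V U ∨ mark V f = δup U V
  /-- the marked tuples are 0-consistent (nested case) -/
  mark_consistent_n : ∀ (f : F) (U V : Idx), pnest V U →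
    mark U f = δup V U ∨ mark V f = δdown U V (mark U f)

namespace HFT

variable {Idx : Type*} [Fintype Idx] {Vtx : Idx → Type*} [∀ U, Fintype (Vtx U)]
  {F : Type*} [Fintype F]

/-- Transversality `U ⋔ V`: distinct, not nested either way, not orthogonal. -/
def transv (H : HFT Idx Vtx F) (U V : Idx) : Prop :=
  U ≠ V ∧ ¬ H.pnest U V ∧ ¬ H.pnest V U ∧ ¬ H.orth U V

/-- A tuple of vertices is 0-consistent. -/
def ZeroConsistent (H : HFT Idx Vtx F) (x : ∀ U, Vtx U) : Prop :=
  (∀ U V, H.transv U V → x U = H.δup V U ∨ x V = H.δup U V) ∧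
  (∀ U V, H.pnest V U → x U = H.δup V U ∨ x V = H.δdown U V (x U))

/-- The set `Q` of all 0-consistent tuples. -/
def Q (H : HFT Idx Vtx F) : Set (∀ U, Vtx U) := {x | H.ZeroConsistent x}

/-- The ℓ¹ metric on tuples: `d_Q(x, y) = Σ_U d_{T_U}(x_U, y_U)`. -/
noncomputable def dQ (H : HFT Idx Vtx F) (x y : ∀ U, Vtx U) : ℕ :=
  ∑ U : Idx, (H.G U).dist (x U) (y U)

/-- The half-tree of the edge `{u, v}` of `T_U` on the `u`-side: the vertices strictly
closer to `u` than to `v`. -/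
def halfTree (H : HFT Idx Vtx F) (U : Idx) (u v : Vtx U) : Set (Vtx U) :=
  {w | (H.G U).dist w u < (H.G U).dist w v}

/-- The half-space of `Q` determined by the half-tree of `{u, v} ⊆ T_U` on the
`u`-side. -/
def halfSpace (H : HFT Idx Vtx F) (U : Idx) (u v : Vtx U) : Set (∀ W, Vtx W) :=
  {x | x ∈ H.Q ∧ x U ∈ H.halfTree U u v}

/-- Two walls (dual to the edge `{u, v}` of `T_U` and the edge `{u', v'}` of `T_V`)
cross: all four intersections of half-spaces are nonempty. -/
def Crosses (H : HFT Idx Vtx F) (U : Idx) (u v : Vtx U) (V : Idx) (u' v' : Vtx V) :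
    Prop :=
  (H.halfSpace U u v ∩ H.halfSpace V u' v').Nonempty ∧
  (H.halfSpace U u v ∩ H.halfSpace V v' u').Nonempty ∧
  (H.halfSpace U v u ∩ H.halfSpace V u' v').Nonempty ∧
  (H.halfSpace U v u ∩ H.halfSpace V v' u').Nonempty

/-- Two walls are transverse: none of the four inclusions among their half-spaces and
complements holds. -/
def WallTransverse (H : HFT Idx Vtx F) (U : Idx) (u v : Vtx U) (V : Idx)
    (u' v' : Vtx V) : Prop :=
  ¬ (H.halfSpace U u v ⊆ H.halfSpace V u' v') ∧
  ¬ (H.halfSpace U u v ⊆ H.halfSpace V v' u') ∧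
  ¬ (H.halfSpace U v u ⊆ H.halfSpace V u' v') ∧
  ¬ (H.halfSpace U v u ⊆ H.halfSpace V v' u')

end HFT

variable {Idx : Type*} [Fintype Idx] {Vtx : Idx → Type*} [∀ U, Fintype (Vtx U)]
  {F : Type*} [Fintype F]

section TreeLemmas

open SimpleGraph

variable {α : Type*} {G : SimpleGraph α}

/-- A vertex on a geodesic realizes the triangle equality. -/
lemma geod_point (hc : G.Connected) {a b z : α} (p : G.Walk a b)
    (hp : p.length = G.dist a b) (hz : z ∈ p.support) :
    G.dist a z + G.dist z b = G.dist a b := by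
  classical
  have h1 : G.dist a z ≤ (p.takeUntil z hz).length := SimpleGraph.dist_le _
  have h2 : G.dist z b ≤ (p.dropUntil z hz).length := SimpleGraph.dist_le _
  have h3 : (p.takeUntil z hz).length + (p.dropUntil z hz).length = p.length := by
    rw [← Walk.length_append, Walk.take_spec]
  have h4 := hc.dist_triangle (u := a) (v := z) (w := b)
  omega

lemma dist_succ_of_lt (hc : G.Connected) {u₁ u₂ a : α} (h : G.Adj u₁ u₂)
    (ha : G.dist a u₁ < G.dist a u₂) : G.dist a u₂ = G.dist a u₁ + 1 := by
  have h1 : G.dist a u₂ ≤ G.dist a u₁ + G.dist u₁ u₂ := hc.dist_triangle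
  have h2 : G.dist u₁ u₂ = 1 := SimpleGraph.dist_eq_one_iff_adj.mpr h
  omega

/-- In a tree, no vertex is equidistant from the endpoints of an edge. -/
lemma tree_dist_ne (ht : G.IsTree) {u₁ u₂ : α} (h : G.Adj u₁ u₂) (b : α) :
    G.dist b u₁ ≠ G.dist b u₂ := by
  intro heq
  obtain ⟨p, hp, hl⟩ := ht.isConnected.exists_path_of_dist b u₁
  have hu₂ : u₂ ∉ p.support := by
    intro hmem
    have h1 := geod_point ht.isConnected p hl hmem
    have h2 : G.dist u₂ u₁ = 1 := SimpleGraph.dist_eq_one_iff_adj.mpr h.symm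
    omega
  have hq : (p.concat h).IsPath := by
    rw [Walk.isPath_def, Walk.support_concat]
    have := List.Nodup.concat hu₂ hp.support_nodup
    rwa [List.concat_eq_append] at this
  obtain ⟨q, hqp, hql⟩ := ht.isConnected.exists_path_of_dist b u₂
  have heqp := ht.IsAcyclic.path_unique ⟨p.concat h, hq⟩ ⟨q, hqp⟩
  have hlen : (p.concat h).length = q.length := by
    rw [show p.concat h = q from congrArg Subtype.val heqp]
  rw [Walk.length_concat] at hlen
  omega

/-- In a tree, the geodesic between vertices on opposite sides of an edge
passes through the edge. -/
lemma tree_cross (ht : G.IsTree) {u₁ u₂ a b : α} (h : G.Adj u₁ u₂)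
    (ha : G.dist a u₁ < G.dist a u₂) (hb : G.dist b u₂ < G.dist b u₁) :
    G.dist a b = G.dist a u₁ + 1 + G.dist u₂ b := by
  have hc := ht.isConnected
  obtain ⟨p, hp, hpl⟩ := hc.exists_path_of_dist a u₁
  obtain ⟨q, hqp, hql⟩ := hc.exists_path_of_dist u₂ b
  have hps : ∀ z ∈ p.support, G.dist z u₁ < G.dist z u₂ := by
    intro z hz
    have h1 := geod_point hc p hpl hz
    have h2 : G.dist a u₂ ≤ G.dist a z + G.dist z u₂ := hc.dist_triangle
    have h3 := dist_succ_of_lt hc h ha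
    omega
  have hqs : ∀ z ∈ q.support, G.dist z u₂ < G.dist z u₁ := by
    intro z hz
    have h1 := geod_point hc q hql hz
    have h2 : G.dist u₁ b ≤ G.dist u₁ z + G.dist z b := hc.dist_triangle
    have h3 := dist_succ_of_lt hc h.symm hb
    have c1 : G.dist u₂ z = G.dist z u₂ := SimpleGraph.dist_comm
    have c2 : G.dist u₁ z = G.dist z u₁ := SimpleGraph.dist_comm
    have c3 : G.dist u₁ b = G.dist b u₁ := SimpleGraph.dist_comm
    have c4 : G.dist u₂ b = G.dist b u₂ := SimpleGraph.dist_comm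
    omega
  have hdisj : ∀ z ∈ p.support, z ∉ q.support := by
    intro z hz hz'
    exact absurd (hps z hz) (not_lt.mpr (le_of_lt (hqs z hz')))
  have hr : (p.append (Walk.cons h q)).IsPath := by
    rw [Walk.isPath_def, Walk.support_append, Walk.support_cons, List.tail_cons]
    exact List.Nodup.append hp.support_nodup hqp.support_nodup hdisj
  obtain ⟨t, htp, htl⟩ := hc.exists_path_of_dist a b
  have heqp := ht.IsAcyclic.path_unique ⟨t, htp⟩ ⟨p.append (Walk.cons h q), hr⟩
  have hlen : t.length = (p.append (Walk.cons h q)).length := by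
    rw [show t = p.append (Walk.cons h q) from congrArg Subtype.val heqp]
  rw [Walk.length_append, Walk.length_cons] at hlen
  omega

/-- Two vertices on the same side of an edge lie in the same component of the
tree minus any vertex on the other side. -/
lemma sameComp_of_halfTree (ht : G.IsTree) {u₁ u₂ a b w : α} (h : G.Adj u₁ u₂)
    (ha : G.dist a u₁ < G.dist a u₂) (hb : G.dist b u₁ < G.dist b u₂)
    (hw : ¬ G.dist w u₁ < G.dist w u₂) :
    treeSameComp G w a b := by
  have hne := tree_dist_ne ht h w
  have hw' : G.dist w u₂ < G.dist w u₁ := by omega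
  have haw : G.dist a w = G.dist a u₁ + 1 + G.dist u₂ w := tree_cross ht h ha hw'
  have hbw : G.dist b w = G.dist b u₁ + 1 + G.dist u₂ w := tree_cross ht h hb hw'
  have hab : G.dist a b ≤ G.dist a u₁ + G.dist u₁ b := ht.isConnected.dist_triangle
  have c1 : G.dist u₁ b = G.dist b u₁ := SimpleGraph.dist_comm
  have c2 : G.dist w b = G.dist b w := SimpleGraph.dist_comm
  refine ⟨fun he => hw (he ▸ ha), fun he => hw (he ▸ hb), ?_⟩
  omega

end TreeLemmas

/-- **Nesting criteria for half-spaces** (Lemma `hs nest`, sufficiency). The half-space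
of the edge `{u₁, u₂}` of `T_U` on the `u₁`-side is contained in the half-space of the
edge `{u₁', u₂'}` of `T_V` on the `u₁'`-side in each of the four listed situations. -/
theorem hs_nest (H : HFT Idx Vtx F) :
    -- (1) same domain, nested half-trees
    (∀ (U : Idx) (u₁ u₂ u₁' u₂' : Vtx U),
      (H.G U).Adj u₁ u₂ → (H.G U).Adj u₁' u₂' →
      H.halfTree U u₁ u₂ ⊆ H.halfTree U u₁' u₂' →
      H.halfSpace U u₁ u₂ ⊆ H.halfSpace U u₁' u₂') ∧
    -- (2) transverse domains: `δ^U_V ∈ s'` and `δ^V_U ∉ s`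
    (∀ (U V : Idx) (u₁ u₂ : Vtx U) (u₁' u₂' : Vtx V),
      (H.G U).Adj u₁ u₂ → (H.G V).Adj u₁' u₂' → H.transv U V →
      H.δup U V ∈ H.halfTree V u₁' u₂' → H.δup V U ∉ H.halfTree U u₁ u₂ →
      H.halfSpace U u₁ u₂ ⊆ H.halfSpace V u₁' u₂') ∧
    -- (3) `V ⊏ U`: `δ^V_U ∉ s` and the common value of `δ^U_V` on the component of
    -- `T_U − δ^V_U` containing `s` (represented by `u₁ ∈ s`) lies in `s'`
    (∀ (U V : Idx) (u₁ u₂ : Vtx U) (u₁' u₂' : Vtx V),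
      (H.G U).Adj u₁ u₂ → (H.G V).Adj u₁' u₂' → H.pnest V U →
      H.δup V U ∉ H.halfTree U u₁ u₂ → H.δdown U V u₁ ∈ H.halfTree V u₁' u₂' →
      H.halfSpace U u₁ u₂ ⊆ H.halfSpace V u₁' u₂') ∧
    -- (4) `U ⊏ V`: `δ^U_V ∈ s'` and the common value of `δ^V_U` on the component of
    -- `T_V − δ^U_V` containing the complementary half-tree `s'*` (represented by
    -- `u₂' ∈ s'*`) lies outside `s`
    (∀ (U V : Idx) (u₁ u₂ : Vtx U) (u₁' u₂' : Vtx V),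
      (H.G U).Adj u₁ u₂ → (H.G V).Adj u₁' u₂' → H.pnest U V →
      H.δup U V ∈ H.halfTree V u₁' u₂' → H.δdown V U u₂' ∉ H.halfTree U u₁ u₂ →
      H.halfSpace U u₁ u₂ ⊆ H.halfSpace V u₁' u₂') := by
  refine ⟨?_, ?_, ?_, ?_⟩
  · -- (1) same domain
    intro U u₁ u₂ u₁' u₂' _ _ hsub x hx
    exact ⟨hx.1, hsub hx.2⟩
  · -- (2) transverse
    intro U V u₁ u₂ u₁' u₂' _ _ htr hδ hδ' x hx
    obtain ⟨⟨hc1, hc2⟩, hxU⟩ := hx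
    refine ⟨⟨hc1, hc2⟩, ?_⟩
    rcases hc1 U V htr with h1 | h1
    · exact absurd (h1 ▸ hxU) hδ'
    · rw [h1]; exact hδ
  · -- (3) V ⊏ U
    intro U V u₁ u₂ u₁' u₂' h h' hpn hδ hval x hx
    obtain ⟨⟨hc1, hc2⟩, hxU⟩ := hx
    refine ⟨⟨hc1, hc2⟩, ?_⟩
    rcases hc2 U V hpn with h1 | h1
    · exact absurd (h1 ▸ hxU) hδ
    · have hu₁ : u₁ ∈ H.halfTree U u₁ u₂ := by
        show (H.G U).dist u₁ u₁ < (H.G U).dist u₁ u₂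
        rw [SimpleGraph.dist_self, SimpleGraph.dist_eq_one_iff_adj.mpr h]
        exact Nat.zero_lt_one
      have hsc := sameComp_of_halfTree (H.tree U) h hxU hu₁ hδ
      rw [h1, H.bgi_const U V hpn _ _ hsc]
      exact hval
  · -- (4) U ⊏ V
    intro U V u₁ u₂ u₁' u₂' h h' hpn hδ hval x hx
    obtain ⟨⟨hc1, hc2⟩, hxU⟩ := hx
    refine ⟨⟨hc1, hc2⟩, ?_⟩
    by_contra hxV
    rcases hc2 V U hpn with h1 | h1
    · exact hxV (h1 ▸ hδ)
    · have hne := tree_dist_ne (H.tree V) h' (x V)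
      have hxV0 : ¬ (H.G V).dist (x V) u₁' < (H.G V).dist (x V) u₂' := hxV
      have hxV' : (H.G V).dist (x V) u₂' < (H.G V).dist (x V) u₁' := by omega
      have hu₂' : (H.G V).dist u₂' u₂' < (H.G V).dist u₂' u₁' := by
        rw [SimpleGraph.dist_self, SimpleGraph.dist_comm,
          SimpleGraph.dist_eq_one_iff_adj.mpr h']
        exact Nat.zero_lt_one
      have hδ0 : (H.G V).dist (H.δup U V) u₁' < (H.G V).dist (H.δup U V) u₂' := hδ
      have hδ' : ¬ (H.G V).dist (H.δup U V) u₂' < (H.G V).dist (H.δup U V) u₁' := by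
        omega
      have hsc := sameComp_of_halfTree (H.tree V) h'.symm hxV' hu₂' hδ'
      have heq := H.bgi_const V U hpn _ _ hsc
      have : H.δdown V U u₂' ∈ H.halfTree U u₁ u₂ := by
        rw [← heq, ← h1]; exact hxU
      exact hval this
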